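/- The number of indices n with 0 ≤ n < a·δ such that w(n+1) − w(n) = a + 1 equals δ − 1. -/
import Mathlib


/-- `w a b δ n = n + a⌊n/a⌋ + b⌊n/δ⌋`. -/
def w (a b δ n : ℕ) : ℕ := n + a * (n / a) + b * (n / δ)

lemma gap_eq (a b δ n : ℕ) :
    w a b δ (n + 1) - w a b δ n =
      1 + a * (if a ∣ n + 1 then 1 else 0) + b * (if δ ∣ n + 1 then 1 else 0) := by
  simp only [w, Nat.succ_div, Nat.mul_add]
  omega

/-- In one index-period of length `aδ`, exactly `δ - 1` gaps equal `a + 1`. -/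
theorem stmt_9 (a δ : ℕ) (ha : 0 < a) (hlt : a < δ) (hlt2 : δ < 2 * a)
    (hgcd : Nat.gcd a δ = 1) (b : ℕ) (hb : b = a + δ) :
    ((Finset.range (a * δ)).filter
      (fun n => w a b δ (n + 1) - w a b δ n = a + 1)).card = δ - 1 := by
  have hδ : 0 < δ := lt_trans ha hlt
  have hcond : ∀ n, (w a b δ (n + 1) - w a b δ n = a + 1) ↔
      (a ∣ n + 1 ∧ ¬ δ ∣ n + 1) := by
    intro n
    rw [gap_eq]
    by_cases h1 : a ∣ n + 1 <;> by_cases h2 : δ ∣ n + 1 <;>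
      simp [h1, h2] <;> omega
  have himg : (Finset.range (a * δ)).filter
      (fun n => w a b δ (n + 1) - w a b δ n = a + 1) =
      (Finset.range (δ - 1)).image (fun k => (k + 1) * a - 1) := by
    ext n
    simp only [Finset.mem_filter, Finset.mem_range, Finset.mem_image, hcond]
    constructor
    · rintro ⟨hn, ⟨m, hm⟩, hnd⟩
      have hm1 : 1 ≤ m := by
        rcases Nat.eq_zero_or_pos m with rfl | h
        · simp at hm
        · exact h
      have hmle : m ≤ δ := Nat.le_of_mul_le_mul_left (by omega) ha
      have hmne : m ≠ δ := by
        intro heq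
        exact hnd (by rw [hm, heq]; exact dvd_mul_left δ a)
      have hmm : (m - 1 + 1) * a = a * m := by
        rw [show m - 1 + 1 = m from by omega, Nat.mul_comm]
      refine ⟨m - 1, by omega, by omega⟩
    · rintro ⟨k, hk, rfl⟩
      have h1 : (k + 1) * a - 1 + 1 = (k + 1) * a := by
        have : 1 ≤ (k + 1) * a := Nat.mul_pos (by omega) ha
        omega
      refine ⟨?_, ⟨k + 1, by rw [h1, Nat.mul_comm]⟩, ?_⟩
      · have h2 : (k + 1) * a ≤ (δ - 1) * a := Nat.mul_le_mul_right a (by omega)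
        have h3 : (δ - 1) * a < δ * a := (Nat.mul_lt_mul_right ha).mpr (by omega)
        have h4 : δ * a = a * δ := Nat.mul_comm δ a
        omega
      · rw [h1]
        intro hd
        have hcop : Nat.Coprime δ a := (Nat.coprime_comm.mp hgcd)
        have hdk : δ ∣ k + 1 := hcop.dvd_of_dvd_mul_right hd
        have := Nat.le_of_dvd (by omega) hdk
        omega
  rw [himg, Finset.card_image_of_injective, Finset.card_range]
  intro x y hxy
  simp only at hxy
  have hx : 1 ≤ (x + 1) * a := Nat.mul_pos (by omega) ha
  have hy : 1 ≤ (y + 1) * a := Nat.mul_pos (by omega) ha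
  have : (x + 1) * a = (y + 1) * a := by omega
  exact Nat.succ_injective (Nat.eq_of_mul_eq_mul_right ha this)
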